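/- Let 1 ≤ r ≤ n and m ≥ 1, and consider the arrangement with defining polynomial p = x₁⋯x_r in S = ℂ[x₁,…,xₙ]. For α ∈ ℕⁿ let x_α = Π_{i ≤ r, αᵢ > 0} xᵢ (the monic generator of the radical of ⟨x₁^{α₁}⋯x_r^{α_r}⟩). Then the family {x_α · ∂^α : α ∈ ℕⁿ, |α| = m} is a basis of the S-module D^(m)(x₁⋯x_r); in particular D^(m)(x₁⋯x_r) is a free S-module. -/

import Mathlib

open MvPolynomial

noncomputable section

/-- The polynomial ring `S = ℂ[x₁,…,xₙ]`. -/
abbrev S (n : ℕ) : Type := MvPolynomial (Fin n) ℂ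

/-- The finite set of exponent vectors `α ∈ ℕⁿ` with `|α| = m`. -/
def degIdx (n m : ℕ) : Finset (Fin n → ℕ) :=
  (Fintype.piFinset fun _ : Fin n => Finset.range (m + 1)).filter fun α => ∑ i, α i = m

/-- The differential operator `∂^α`, the composition of the partial derivatives
`∂/∂xᵢ` applied `αᵢ` times. -/
def pd {n : ℕ} (α : Fin n → ℕ) : Module.End ℂ (S n) :=
  (List.ofFn fun i : Fin n => ((pderiv (R := ℂ) i).toLinearMap) ^ (α i)).prod

/-- The action of an order-`m` differential operator with polynomial coefficients
`c = (c_α)_{|α| = m}` on a polynomial: `c(f) = Σ_{|α|=m} c_α ∂^α f`. -/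
def applyOp {n m : ℕ} (c : degIdx n m → S n) (f : S n) : S n :=
  ∑ α : degIdx n m, c α * pd (α : Fin n → ℕ) f

lemma applyOp_add {n m : ℕ} (a b : degIdx n m → S n) (f : S n) :
    applyOp (a + b) f = applyOp a f + applyOp b f := by
  simp [applyOp, add_mul, Finset.sum_add_distrib]

lemma applyOp_smul {n m : ℕ} (s : S n) (a : degIdx n m → S n) (f : S n) :
    applyOp (s • a) f = s * applyOp a f := by
  simp [applyOp, Finset.mul_sum, mul_assoc]

lemma applyOp_zero {n m : ℕ} (f : S n) : applyOp (0 : degIdx n m → S n) f = 0 := by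
  simp [applyOp]

/-- `D^(m)(p)`: the `S`-module of order-`m` differential operators with polynomial
coefficients preserving the principal ideal `⟨p⟩`. -/
def Dm {n : ℕ} (m : ℕ) (p : S n) : Submodule (S n) (degIdx n m → S n) where
  carrier := {c | ∀ f ∈ Ideal.span {p}, applyOp c f ∈ Ideal.span {p}}
  add_mem' := by
    intro a b ha hb f hf
    rw [applyOp_add]
    exact Ideal.add_mem _ (ha f hf) (hb f hf)
  zero_mem' := by
    intro f hf
    rw [applyOp_zero]
    exact Ideal.zero_mem _
  smul_mem' := by
    intro s c hc f hf
    rw [applyOp_smul]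
    exact Ideal.mul_mem_left _ _ (hc f hf)

/-- A nonzero linear form. -/
def IsLinearForm {n : ℕ} (q : S n) : Prop := q ≠ 0 ∧ q.IsHomogeneous 1

/-- The linear forms of an arrangement are pairwise non-proportional. -/
def PairwiseNonProportional {n r : ℕ} (p : Fin r → S n) : Prop :=
  ∀ i j : Fin r, i ≠ j → ∀ a : ℂ, p i ≠ a • p j

end

noncomputable section
open scoped Classical

/-- `x_α = Π_{i ≤ r, αᵢ > 0} xᵢ`, the monic generator of the radical of
`⟨x₁^{α₁}⋯x_r^{α_r}⟩`. -/
def xRad {n : ℕ} (r : ℕ) (α : Fin n → ℕ) : S n :=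
  ∏ i ∈ Finset.univ.filter (fun i : Fin n => (i : ℕ) < r ∧ 0 < α i), X i

/-- The operator `x_α ∂^α`: the coefficient family whose only nonzero coefficient
is `x_α`, in position `α`. -/
def xRadOp {n : ℕ} (r m : ℕ) (α : degIdx n m) : degIdx n m → S n :=
  Pi.single α (xRad r (α : Fin n → ℕ))
namespace Aux
open Finset
lemma pderiv_end_comm {n : ℕ} (i j : Fin n) :
    Commute ((pderiv (R := ℂ) i).toLinearMap) ((pderiv (R := ℂ) j).toLinearMap) := by
  rw [Commute, SemiconjBy]
  refine LinearMap.ext fun f => ?_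
  show pderiv i (pderiv j f) = pderiv j (pderiv i f)
  induction f using MvPolynomial.induction_on' with
  | monomial s a =>
      simp only [pderiv_monomial]
      rcases eq_or_ne i j with rfl | hij
      · rfl
      · have hsub : (s - Finsupp.single j 1) - Finsupp.single i 1
            = (s - Finsupp.single i 1) - Finsupp.single j 1 := by
          ext k; simp only [Finsupp.coe_tsub, Pi.sub_apply]; omega
        have h1 : ((s - Finsupp.single j 1 : Fin n →₀ ℕ)) i = s i := by
          simp [Finsupp.single_eq_of_ne hij]
        have h2 : ((s - Finsupp.single i 1 : Fin n →₀ ℕ)) j = s j := by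
          simp [Finsupp.single_eq_of_ne (Ne.symm hij)]
        rw [hsub, h1, h2, mul_right_comm]
  | add p q hp hq => simp [hp, hq]

lemma listprod_update {M : Type*} [Monoid M] :
    ∀ {k : ℕ} (f : Fin k → M) (i : Fin k) (y : M), (∀ j, Commute y (f j)) →
      (List.ofFn (Function.update f i (f i * y))).prod = (List.ofFn f).prod * y
  | 0, f, i, y, h => i.elim0
  | (k+1), f, i, y, h => by
    induction i using Fin.cases with
    | zero =>
        rw [List.ofFn_succ, List.ofFn_succ]
        have htail : (fun j : Fin k => Function.update f 0 (f 0 * y) j.succ)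
            = fun j : Fin k => f j.succ := by
          funext j
          simp [Function.update_apply, (Fin.succ_ne_zero j)]
        have hc : Commute y (List.ofFn fun j : Fin k => f j.succ).prod := by
          apply Commute.list_prod_right
          intro x hx
          obtain ⟨j, rfl⟩ := List.mem_ofFn.mp hx
          exact h _
        rw [htail, List.prod_cons, List.prod_cons, Function.update_self,
          mul_assoc, hc.eq, ← mul_assoc]
    | succ i =>
        rw [List.ofFn_succ, List.ofFn_succ]
        have hhead : Function.update f i.succ (f i.succ * y) 0 = f 0 := by
          simp [Function.update_apply, (Fin.succ_ne_zero i).symm]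
        have htail : (fun j : Fin k => Function.update f i.succ (f i.succ * y) j.succ)
            = Function.update (fun j : Fin k => f j.succ) i (f i.succ * y) := by
          funext j
          simp only [Function.update_apply]
          by_cases hj : j = i
          · subst hj; simp
          · simp [hj, fun hh => hj (Fin.succ_injective _ hh)]
        rw [List.prod_cons, List.prod_cons, hhead, htail,
          listprod_update (fun j : Fin k => f j.succ) i y (fun j => h _), mul_assoc]

lemma pd_update {n : ℕ} (α : Fin n → ℕ) (i : Fin n) :
    pd (Function.update α i (α i + 1)) = pd α * (pderiv (R := ℂ) i).toLinearMap := by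
  unfold pd
  have : (fun j : Fin n => ((pderiv (R := ℂ) j).toLinearMap) ^ (Function.update α i (α i + 1) j))
      = Function.update (fun j : Fin n => ((pderiv (R := ℂ) j).toLinearMap) ^ (α j)) i
        ((((pderiv (R := ℂ) i).toLinearMap) ^ (α i)) * (pderiv (R := ℂ) i).toLinearMap) := by
    funext j
    by_cases hj : j = i
    · subst hj; simp [pow_succ]
    · simp [Function.update_apply, hj]
  rw [this]
  exact listprod_update _ i _ (fun j => (pderiv_end_comm i j).pow_right _)

lemma pd_zero' {n : ℕ} : pd (fun _ : Fin n => 0) = 1 := by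
  unfold pd
  apply List.prod_eq_one
  intro x hx
  obtain ⟨j, rfl⟩ := List.mem_ofFn.mp hx
  simp


lemma pderiv_dvd {n : ℕ} (i j : Fin n) (c : ℂ) (k : ℕ) (f : S n)
    (h : (X i - C c) ^ k ∣ f) :
    (X i - C c) ^ (k - if j = i then 1 else 0) ∣ pderiv j f := by
  obtain ⟨g, rfl⟩ := h
  rw [pderiv_mul, pderiv_pow]
  by_cases hj : j = i
  · subst hj
    have h1 : pderiv j (X j - C c) = 1 := by
      rw [map_sub, pderiv_X_self, pderiv_C, sub_zero]
    rw [h1, if_pos rfl]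
    apply dvd_add
    · exact ((dvd_mul_left _ _).mul_right _).mul_right _
    · exact Dvd.dvd.mul_right (pow_dvd_pow _ (Nat.sub_le k 1)) _
  · have h1 : pderiv j (X i - C c) = 0 := by
      rw [map_sub, pderiv_X_of_ne (Ne.symm hj), pderiv_C, sub_zero]
    rw [h1, if_neg hj, mul_zero, zero_mul, zero_add, Nat.sub_zero]
    exact Dvd.dvd.mul_right (dvd_refl _) _

lemma exists_pos_of_sum_pos {n : ℕ} {α : Fin n → ℕ} {N : ℕ} (hα : ∑ j, α j = N + 1) :
    ∃ i₀, 0 < α i₀ := by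
  by_contra hc
  push_neg at hc
  have : ∑ j, α j = 0 := Finset.sum_eq_zero fun j _ => Nat.le_zero.mp (hc j)
  omega

lemma sum_update_pred {n : ℕ} {α : Fin n → ℕ} {N : ℕ} (i₀ : Fin n) (hi₀ : 0 < α i₀)
    (hα : ∑ j, α j = N + 1) : ∑ j, Function.update α i₀ (α i₀ - 1) j = N := by
  rw [Finset.sum_update_of_mem (Finset.mem_univ i₀)]
  have h2 := Finset.add_sum_erase Finset.univ α (Finset.mem_univ i₀)
  rw [← Finset.sdiff_singleton_eq_erase] at h2
  omega

lemma update_pred_succ {n : ℕ} (α : Fin n → ℕ) (i₀ : Fin n) (hi₀ : 0 < α i₀) :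
    Function.update (Function.update α i₀ (α i₀ - 1)) i₀
      (Function.update α i₀ (α i₀ - 1) i₀ + 1) = α := by
  funext j
  rcases eq_or_ne j i₀ with rfl | hj
  · simp only [Function.update_self]
    omega
  · simp [Function.update_apply, hj]

lemma pd_dvd {n : ℕ} (i : Fin n) (c : ℂ) :
    ∀ (N : ℕ) (α : Fin n → ℕ), (∑ j, α j) = N → ∀ (k : ℕ) (f : S n),
      (X i - C c) ^ k ∣ f → (X i - C c) ^ (k - α i) ∣ pd α f := by
  intro N
  induction N with
  | zero =>
      intro α hα k f hf
      have hα0 : ∀ j, α j = 0 := by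
        intro j
        have := Finset.sum_eq_zero_iff.mp hα
        exact this j (Finset.mem_univ j)
      rw [show α = fun _ => 0 from funext hα0, pd_zero']
      simpa using hf
  | succ N ih =>
      intro α hα k f hf
      obtain ⟨i₀, hi₀⟩ := exists_pos_of_sum_pos hα
      set α' := Function.update α i₀ (α i₀ - 1) with hα'def
      have hupd := update_pred_succ α i₀ hi₀
      have hpd : pd α = pd α' * (pderiv (R := ℂ) i₀).toLinearMap := by
        conv_lhs => rw [← hupd]
        exact pd_update α' i₀
      rw [hpd, Module.End.mul_apply]
      have h2 := ih α' (sum_update_pred i₀ hi₀ hα) (k - if i₀ = i then 1 else 0)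
        (pderiv i₀ f) (pderiv_dvd i i₀ c k f hf)
      have hexp : k - (if i₀ = i then 1 else 0) - α' i = k - α i := by
        rcases eq_or_ne i₀ i with rfl | hne
        · simp only [hα'def, Function.update_self, if_pos rfl, if_true, eq_self_iff_true]
          omega
        · simp only [if_neg hne, hα'def, Function.update_apply, if_neg (Ne.symm hne)]
          omega
      rwa [hexp] at h2


/-! ### The product `∏ (X j - a j)^(α j)` and the evaluation ideal -/

def mprod {n : ℕ} (a : Fin n → ℂ) (α : Fin n → ℕ) : S n :=
  ∏ j, (X j - C (a j)) ^ (α j)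

def Ia {n : ℕ} (a : Fin n → ℂ) : Ideal (S n) :=
  Ideal.span (Set.range fun j : Fin n => X j - C (a j))

lemma eval_Ia {n : ℕ} {a : Fin n → ℂ} {f : S n} (h : f ∈ Ia a) : eval a f = 0 := by
  have hle : Ia a ≤ RingHom.ker (eval a) := by
    rw [Ia, Ideal.span_le]
    rintro _ ⟨j, rfl⟩
    simp [RingHom.mem_ker]
  exact hle h

lemma pderiv_rest {n : ℕ} (i : Fin n) (a : Fin n → ℂ) (β : Fin n → ℕ) :
    pderiv i (∏ j ∈ Finset.univ.erase i, (X j - C (a j)) ^ (β j)) = 0 := by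
  refine Finset.prod_induction _ (fun q => pderiv i q = 0) ?_ pderiv_one ?_
  · intro x y hx hy
    rw [pderiv_mul, hx, hy, zero_mul, mul_zero, add_zero]
  · intro j hj
    rw [pderiv_pow, map_sub, pderiv_X_of_ne (Finset.ne_of_mem_erase hj), pderiv_C,
      sub_zero, mul_zero]

lemma mprod_erase {n : ℕ} (a : Fin n → ℂ) (α : Fin n → ℕ) (i : Fin n) :
    mprod a α = (X i - C (a i)) ^ (α i) * ∏ j ∈ Finset.univ.erase i, (X j - C (a j)) ^ (α j) :=
  (Finset.mul_prod_erase Finset.univ _ (Finset.mem_univ i)).symm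

lemma pderiv_mprod_mul {n : ℕ} (a : Fin n → ℂ) (α : Fin n → ℕ) (i : Fin n) (hi : 0 < α i)
    (u : S n) :
    pderiv i (mprod a α * u) =
      mprod a (Function.update α i (α i - 1)) *
        ((α i : S n) * u + (X i - C (a i)) * pderiv i u) := by
  set α' := Function.update α i (α i - 1) with hα'
  have hrest : (∏ j ∈ Finset.univ.erase i, (X j - C (a j)) ^ (α' j))
      = ∏ j ∈ Finset.univ.erase i, (X j - C (a j)) ^ (α j) :=
    Finset.prod_congr rfl fun j hj => by
      rw [hα', Function.update_of_ne (Finset.ne_of_mem_erase hj)]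
  have hXi : pderiv i (X i - C (a i)) = 1 := by
    rw [map_sub, pderiv_X_self, pderiv_C, sub_zero]
  have hpow : (X i - C (a i)) ^ (α i) = (X i - C (a i)) ^ (α i - 1) * (X i - C (a i)) := by
    conv_lhs => rw [show α i = (α i - 1) + 1 by omega]
    rw [pow_succ]
  rw [mprod_erase a α i, mprod_erase a α' i, hrest, mul_assoc, pderiv_mul, pderiv_pow,
    pderiv_mul, pderiv_rest, hXi, hα', Function.update_self, hpow]
  ring

lemma pd_mprod {n : ℕ} (a : Fin n → ℂ) :
    ∀ (N : ℕ) (α : Fin n → ℕ), (∑ j, α j) = N → ∀ u : S n,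
      pd α (mprod a α * u) - C ((∏ j, Nat.factorial (α j) : ℕ) : ℂ) * u ∈ Ia a := by
  intro N
  induction N with
  | zero =>
      intro α hα u
      have hα0 : ∀ j, α j = 0 := by
        intro j
        exact Finset.sum_eq_zero_iff.mp hα j (Finset.mem_univ j)
      rw [show α = fun _ => 0 from funext hα0, pd_zero']
      simp only [mprod, pow_zero, Finset.prod_const_one, one_mul, Module.End.one_apply,
        Nat.factorial_zero, Nat.cast_one, map_one]
      simp
  | succ N ih =>
      intro α hα u
      obtain ⟨i₀, hi₀⟩ := exists_pos_of_sum_pos hα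
      set α' := Function.update α i₀ (α i₀ - 1) with hα'def
      have hupd := update_pred_succ α i₀ hi₀
      have hpd : pd α = pd α' * (pderiv (R := ℂ) i₀).toLinearMap := by
        conv_lhs => rw [← hupd]
        exact pd_update α' i₀
      rw [hpd, Module.End.mul_apply]
      simp only [Derivation.coeFn_coe]
      rw [pderiv_mprod_mul a α i₀ hi₀ u]
      set v : S n := (α i₀ : S n) * u + (X i₀ - C (a i₀)) * pderiv i₀ u with hv
      have hIH := ih α' (sum_update_pred i₀ hi₀ hα) v
      have hfac : (∏ j, Nat.factorial (α j)) = α i₀ * ∏ j, Nat.factorial (α' j) := by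
        rw [← Finset.mul_prod_erase Finset.univ (fun j => Nat.factorial (α j))
            (Finset.mem_univ i₀),
          ← Finset.mul_prod_erase Finset.univ (fun j => Nat.factorial (α' j))
            (Finset.mem_univ i₀)]
        have herase : (∏ j ∈ Finset.univ.erase i₀, Nat.factorial (α' j))
            = ∏ j ∈ Finset.univ.erase i₀, Nat.factorial (α j) :=
          Finset.prod_congr rfl fun j hj => by
            rw [hα'def, Function.update_of_ne (Finset.ne_of_mem_erase hj)]
        rw [herase, hα'def, Function.update_self, ← mul_assoc,
          Nat.mul_factorial_pred hi₀.ne']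
      have hgen : (X i₀ - C (a i₀)) ∈ Ia a := Ideal.subset_span ⟨i₀, rfl⟩
      have hmem2 : C ((∏ j, Nat.factorial (α' j) : ℕ) : ℂ) *
          ((X i₀ - C (a i₀)) * pderiv i₀ u) ∈ Ia a :=
        Ideal.mul_mem_left _ _ (Ideal.mul_mem_right _ _ hgen)
      have hsum := (Ia a).add_mem hIH hmem2
      convert hsum using 1
      have hCnat : ((α i₀ : ℕ) : S n) = C ((α i₀ : ℕ) : ℂ) := by
        simp
      rw [hv, hfac, hCnat, Nat.cast_mul, C_mul]
      ring

lemma eval_pd_mprod {n : ℕ} (a : Fin n → ℂ) (α : Fin n → ℕ) (u : S n) :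
    eval a (pd α (mprod a α * u)) = ((∏ j, Nat.factorial (α j) : ℕ) : ℂ) * eval a u := by
  have h := eval_Ia (pd_mprod a (∑ j, α j) α rfl u)
  simp only [map_sub, map_mul, eval_C, sub_eq_zero] at h
  exact h

lemma eval_pd_lt {n : ℕ} (a : Fin n → ℂ) (α β : Fin n → ℕ) (j : Fin n) (hj : α j < β j)
    (u : S n) : eval a (pd α (mprod a β * u)) = 0 := by
  have hdvd : (X j - C (a j)) ^ (β j) ∣ mprod a β * u := by
    refine Dvd.dvd.mul_right ?_ u
    rw [mprod_erase a β j]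
    exact dvd_mul_right _ _
  have h := pd_dvd j (a j) (∑ i, α i) α rfl (β j) _ hdvd
  have h1 : (X j - C (a j)) ∣ pd α (mprod a β * u) := by
    refine dvd_trans ?_ h
    exact dvd_pow_self _ (by omega)
  obtain ⟨g, hg⟩ := h1
  rw [hg, map_mul]
  simp

/-! ### Divisibility by the variables -/

def phi {n : ℕ} (i : Fin n) : S n →ₐ[ℂ] S n :=
  aeval (fun j => if j = i then 0 else X j)

lemma X_dvd_sub_phi {n : ℕ} (i : Fin n) (q : S n) : X (R := ℂ) i ∣ q - phi i q := by
  induction q using MvPolynomial.induction_on with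
  | C c => rw [phi, aeval_C, algebraMap_eq, sub_self]; exact dvd_zero _
  | add p q hp hq => rw [map_add, add_sub_add_comm]; exact dvd_add hp hq
  | mul_X p j hp =>
      rw [map_mul, phi, aeval_X]
      by_cases hj : j = i
      · subst hj
        rw [if_pos rfl, mul_zero, sub_zero]
        exact Dvd.intro_left p rfl
      · rw [if_neg hj, ← sub_mul]
        exact (hp).mul_right _

lemma eval_phi {n : ℕ} (i : Fin n) (q : S n) (x : Fin n → ℂ) :
    eval x (phi i q) = eval (fun j => if j = i then 0 else x j) q := by
  induction q using MvPolynomial.induction_on with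
  | C c => simp [phi, aeval_C, algebraMap_eq]
  | add p q hp hq => simp [map_add, hp, hq]
  | mul_X p j hp =>
      rw [map_mul, map_mul, hp, phi, aeval_X]
      congr 1
      by_cases hj : j = i
      · subst hj; simp
      · simp [if_neg hj]

lemma X_dvd_iff_phi {n : ℕ} (i : Fin n) (q : S n) : X (R := ℂ) i ∣ q ↔ phi i q = 0 := by
  constructor
  · rintro ⟨t, rfl⟩
    rw [map_mul, phi, aeval_X, if_pos rfl, zero_mul]
  · intro h
    have := X_dvd_sub_phi i q
    rwa [h, sub_zero] at this

lemma X_dvd_of_eval {n : ℕ} (i : Fin n) (q : S n)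
    (h : ∀ a : Fin n → ℂ, a i = 0 → eval a q = 0) : X (R := ℂ) i ∣ q := by
  rw [X_dvd_iff_phi]
  apply MvPolynomial.funext (q := 0)
  intro x
  rw [eval_phi, map_zero]
  exact h _ (by simp)

lemma prod_X_dvd {n : ℕ} (s : Finset (Fin n)) :
    ∀ z : S n, (∀ i ∈ s, X (R := ℂ) i ∣ z) → (∏ i ∈ s, X (R := ℂ) i) ∣ z := by
  induction s using Finset.induction_on with
  | empty => intro z _; simpa using one_dvd z
  | @insert a s ha ih =>
      intro z hz
      obtain ⟨w, rfl⟩ := hz a (Finset.mem_insert_self a s)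
      rw [Finset.prod_insert ha]
      refine mul_dvd_mul_left _ (ih w fun i hi => ?_)
      have hia : a ≠ i := fun h => ha (h ▸ hi)
      have hd := hz i (Finset.mem_insert_of_mem hi)
      rw [X_dvd_iff_phi] at hd ⊢
      rw [map_mul, phi, aeval_X, if_neg hia] at hd
      rcases mul_eq_zero.mp hd with h0 | h0
      · exact absurd h0 (X_ne_zero a)
      · exact h0


/-! ### Application to the coordinate arrangement -/

def parr (n r : ℕ) : S n :=
  ∏ i ∈ Finset.univ.filter (fun i : Fin n => (i : ℕ) < r), X i

lemma applyOp_single {n m r : ℕ} (α : degIdx n m) (f : S n) :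
    applyOp (xRadOp r m α) f = xRad r (α : Fin n → ℕ) * pd (α : Fin n → ℕ) f := by
  unfold applyOp xRadOp
  rw [Finset.sum_eq_single α]
  · rw [Pi.single_eq_same]
  · intro β _ hβ
    rw [Pi.single_eq_of_ne hβ, zero_mul]
  · intro h
    exact absurd (Finset.mem_univ α) h

lemma sum_degIdx {n m : ℕ} (α : degIdx n m) : ∑ j, (α : Fin n → ℕ) j = m :=
  (Finset.mem_filter.mp α.2).2

lemma xRad_ne_zero {n r : ℕ} (α : Fin n → ℕ) : xRad r α ≠ 0 :=
  Finset.prod_ne_zero_iff.mpr fun i _ => X_ne_zero i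

lemma xRadOp_mem {n r m : ℕ} (α : degIdx n m) : xRadOp r m α ∈ Dm m (parr n r) := by
  intro f hf
  rw [Ideal.mem_span_singleton] at hf ⊢
  rw [applyOp_single]
  apply prod_X_dvd
  intro i hi
  by_cases hα : 0 < (α : Fin n → ℕ) i
  · have hmem : i ∈ Finset.univ.filter (fun i : Fin n => (i : ℕ) < r ∧ 0 < (α : Fin n → ℕ) i) := by
      simp only [Finset.mem_filter, Finset.mem_univ, true_and]
      exact ⟨(Finset.mem_filter.mp hi).2, hα⟩
    exact (Finset.dvd_prod_of_mem _ hmem).mul_right _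
  · have hXf : (X i - C (0 : ℂ)) ^ 1 ∣ f := by
      rw [map_zero, sub_zero, pow_one]
      exact dvd_trans (Finset.dvd_prod_of_mem _ hi) hf
    have h := pd_dvd i 0 (∑ j, (α : Fin n → ℕ) j) (α : Fin n → ℕ) rfl 1 f hXf
    rw [map_zero, sub_zero, Nat.eq_zero_of_not_pos hα, Nat.sub_zero, pow_one] at h
    exact h.mul_left _

lemma exists_lt_of_ne {n m : ℕ} (α β : degIdx n m)
    (hne : β ≠ α) : ∃ j, (β : Fin n → ℕ) j < (α : Fin n → ℕ) j := by
  by_contra hcon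
  push_neg at hcon
  apply hne
  have hsum : ∑ j, (α : Fin n → ℕ) j = ∑ j, (β : Fin n → ℕ) j := by
    rw [sum_degIdx, sum_degIdx]
  have := (Finset.sum_eq_sum_iff_of_le (fun j _ => hcon j)).mp hsum
  exact Subtype.ext (funext fun j => (this j (Finset.mem_univ j)).symm)

lemma X_dvd_coeff_of_mem {n r m : ℕ} (c : degIdx n m → S n) (hc : c ∈ Dm m (parr n r))
    (α : degIdx n m) (i : Fin n) (hir : (i : ℕ) < r) (hαi : 0 < (α : Fin n → ℕ) i) :
    X (R := ℂ) i ∣ c α := by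
  classical
  set R : Finset (Fin n) := Finset.univ.filter (fun j : Fin n => (j : ℕ) < r) with hR
  set u : S n := ∏ j ∈ R.erase i, X j with hu
  set β : Fin n → ℕ := (α : Fin n → ℕ) with hβ
  have hiR : i ∈ R := by simp [hR, hir]
  have hparr : parr n r = X i * u := by
    rw [parr, hu, ← hR, Finset.mul_prod_erase R _ hiR]
  -- Main evaluation identity
  have hq : ∀ a : Fin n → ℂ, a i = 0 → eval a (c α) * eval a u = 0 := by
    intro a hai
    set f : S n := mprod a β * u with hf
    have hfmem : f ∈ Ideal.span {parr n r} := by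
      rw [Ideal.mem_span_singleton, hparr, hf, mprod_erase a β i, hai, map_zero, sub_zero]
      have hpow : (X i : S n) ^ (β i) = X i * X i ^ (β i - 1) := by
        conv_lhs => rw [show β i = 1 + (β i - 1) by omega]
        rw [pow_add, pow_one]
      rw [hpow]
      exact ⟨X i ^ (β i - 1) *
        ∏ j ∈ Finset.univ.erase i, (X j - C (a j)) ^ (β j), by ring⟩
    have happ := hc f hfmem
    rw [Ideal.mem_span_singleton] at happ
    obtain ⟨g, hg⟩ := happ
    have heval : eval a (applyOp c f) = 0 := by
      rw [hg, hparr, map_mul, map_mul, eval_X, hai, zero_mul, zero_mul]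
    rw [applyOp] at heval
    rw [map_sum] at heval
    rw [Finset.sum_eq_single α] at heval
    · rw [hf, map_mul, eval_pd_mprod] at heval
      have hfaczero : ((∏ j, Nat.factorial (β j) : ℕ) : ℂ) ≠ 0 := by
        rw [Nat.cast_ne_zero]
        exact Finset.prod_ne_zero_iff.mpr fun j _ => Nat.factorial_ne_zero _
      have h2 : ((∏ j, Nat.factorial (β j) : ℕ) : ℂ) * (eval a (c α) * eval a u) = 0 := by
        rw [← heval]; ring
      exact (mul_eq_zero.mp h2).resolve_left hfaczero
    · intro γ _ hγ
      obtain ⟨j, hj⟩ := exists_lt_of_ne α γ hγ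
      rw [hf, map_mul, eval_pd_lt a _ β j hj, mul_zero]
    · intro h
      exact absurd (Finset.mem_univ α) h
  have hXdvd : X (R := ℂ) i ∣ c α * u :=
    X_dvd_of_eval i _ fun a hai => by rw [map_mul]; exact hq a hai
  rw [X_dvd_iff_phi] at hXdvd ⊢
  rw [map_mul] at hXdvd
  rcases mul_eq_zero.mp hXdvd with h0 | h0
  · exact h0
  · exfalso
    have hphiu : phi i u = u := by
      rw [hu, phi, map_prod]
      refine Finset.prod_congr rfl fun j hj => ?_
      rw [aeval_X, if_neg (Finset.ne_of_mem_erase hj)]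
    rw [hphiu] at h0
    exact Finset.prod_ne_zero_iff.mpr (fun j _ => X_ne_zero j) h0

lemma xRad_dvd_coeff {n r m : ℕ} (c : degIdx n m → S n) (hc : c ∈ Dm m (parr n r))
    (α : degIdx n m) : xRad r (α : Fin n → ℕ) ∣ c α := by
  apply prod_X_dvd
  intro i hi
  obtain ⟨hir, hαi⟩ := (Finset.mem_filter.mp hi).2
  exact X_dvd_coeff_of_mem c hc α i hir hαi


def Lmap (n r m : ℕ) : (degIdx n m → S n) →ₗ[S n] (degIdx n m → S n) where
  toFun d := fun β => xRad r (β : Fin n → ℕ) * d β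
  map_add' d d' := by funext β; simp [mul_add]
  map_smul' s d := by funext β; simp [smul_eq_mul]; ring

lemma Lmap_eq_sum {n r m : ℕ} (d : degIdx n m → S n) :
    Lmap n r m d = ∑ β : degIdx n m, d β • xRadOp r m β := by
  funext γ
  rw [Finset.sum_apply]
  rw [Finset.sum_eq_single γ]
  · simp only [Pi.smul_apply, xRadOp, Pi.single_eq_same, smul_eq_mul, Lmap]
    rw [mul_comm]
    rfl
  · intro β _ hβ
    simp only [Pi.smul_apply, xRadOp, smul_eq_mul]
    rw [Pi.single_eq_of_ne (Ne.symm hβ), mul_zero]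
  · intro h
    exact absurd (Finset.mem_univ γ) h

lemma Lmap_mem {n r m : ℕ} (d : degIdx n m → S n) : Lmap n r m d ∈ Dm m (parr n r) := by
  rw [Lmap_eq_sum]
  exact Submodule.sum_mem _ fun β _ => Submodule.smul_mem _ _ (xRadOp_mem β)

lemma Lmap_injective {n r m : ℕ} : Function.Injective (Lmap n r m) := by
  intro d d' h
  funext β
  have hβ : xRad r (β : Fin n → ℕ) * d β = xRad r (β : Fin n → ℕ) * d' β :=
    congrFun h β
  exact mul_left_cancel₀ (xRad_ne_zero _) hβ


lemma Lmap_apply {n r m : ℕ} (d : degIdx n m → S n) (γ : degIdx n m) :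
    Lmap n r m d γ = xRad r (γ : Fin n → ℕ) * d γ := rfl

end Aux


/-- For `1 ≤ r ≤ n` and `m ≥ 1`, the family
`{x_α ∂^α : |α| = m}` is a basis of the `S`-module `D^(m)(x₁⋯x_r)`; in particular
this module is free. -/
theorem Dm_coordinate_free {n r m : ℕ} (hr1 : 1 ≤ r) (hrn : r ≤ n) (hm : 1 ≤ m) :
    (∀ α : degIdx n m,
        xRadOp r m α ∈ Dm m (∏ i ∈ Finset.univ.filter (fun i : Fin n => (i : ℕ) < r), X i)) ∧
    (∃ B : Module.Basis (degIdx n m) (S n)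
        (Dm m (∏ i ∈ Finset.univ.filter (fun i : Fin n => (i : ℕ) < r), X i)),
      ∀ α : degIdx n m, (B α : degIdx n m → S n) = xRadOp r m α) ∧
    Module.Free (S n)
      (Dm m (∏ i ∈ Finset.univ.filter (fun i : Fin n => (i : ℕ) < r), X i)) := by
  have hp : (∏ i ∈ Finset.univ.filter (fun i : Fin n => (i : ℕ) < r), X i) = Aux.parr n r := rfl
  rw [hp]
  have hmem : ∀ α : degIdx n m, xRadOp r m α ∈ Dm m (Aux.parr n r) := Aux.xRadOp_mem
  refine ⟨hmem, ?_⟩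
  let ℓ : (degIdx n m → S n) →ₗ[S n] Dm m (Aux.parr n r) :=
    LinearMap.codRestrict _ (Aux.Lmap n r m) Aux.Lmap_mem
  have hbij : Function.Bijective ℓ := by
    constructor
    · intro d d' h
      exact Aux.Lmap_injective (congrArg Subtype.val h)
    · rintro ⟨c, hc⟩
      have hdvd : ∀ β : degIdx n m, xRad r (β : Fin n → ℕ) ∣ c β :=
        fun β => Aux.xRad_dvd_coeff c hc β
      choose d hd using hdvd
      refine ⟨d, Subtype.ext (funext fun β => ?_)⟩
      exact (hd β).symm
  let e : (degIdx n m → S n) ≃ₗ[S n] Dm m (Aux.parr n r) := LinearEquiv.ofBijective ℓ hbij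
  let B : Module.Basis (degIdx n m) (S n) (Dm m (Aux.parr n r)) :=
    (Pi.basisFun (S n) (degIdx n m)).map e
  have hB : ∀ α : degIdx n m, (B α : degIdx n m → S n) = xRadOp r m α := by
    intro α
    have h1 : B α = e (Pi.basisFun (S n) (degIdx n m) α) := Module.Basis.map_apply _ _ _
    rw [h1]
    have h2 : (Pi.basisFun (S n) (degIdx n m)) α = Pi.single α 1 := Pi.basisFun_apply _ _ α
    rw [h2]
    have h3 : ((e (Pi.single α 1) : Dm m (Aux.parr n r)) : degIdx n m → S n)
        = Aux.Lmap n r m (Pi.single α 1) := rfl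
    rw [h3]
    funext γ
    rw [Aux.Lmap_apply]
    rcases eq_or_ne γ α with rfl | hγ
    · rw [Pi.single_eq_same, mul_one, xRadOp, Pi.single_eq_same]
    · rw [Pi.single_eq_of_ne hγ, mul_zero, xRadOp, Pi.single_eq_of_ne hγ]
  exact ⟨⟨B, hB⟩, Module.Free.of_basis B⟩

end
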